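/- arXiv:0805.0349 — 2 statements merged into one kernel-verified Lean document; each statement's English description precedes it below -/
import Mathlib

section
/- The elementary real numbers are closed under the field operations: if α and β are nonnegative elementary real numbers, then α + β and α·β are elementary; if moreover α ≥ β then α − β is elementary; and if α > 0 then 1/α is elementary. -/
/-- The class of elementary functions `ℕ^n → ℕ`: the smallest class containing the
zero function, successor, projections, addition, multiplication and truncated
subtraction, and closed under composition, bounded summation and bounded product. -/
inductive Elem : ∀ {n : ℕ}, ((Fin n → ℕ) → ℕ) → Prop
  | zero {n : ℕ} : Elem (fun _ : Fin n → ℕ => 0)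
  | succ : Elem (fun x : Fin 1 → ℕ => x 0 + 1)
  | proj {n : ℕ} (i : Fin n) : Elem (fun x : Fin n → ℕ => x i)
  | add : Elem (fun x : Fin 2 → ℕ => x 0 + x 1)
  | mul : Elem (fun x : Fin 2 → ℕ => x 0 * x 1)
  | tsub : Elem (fun x : Fin 2 → ℕ => x 0 - x 1)
  | comp {m n : ℕ} {f : (Fin m → ℕ) → ℕ} {g : Fin m → (Fin n → ℕ) → ℕ} :
      Elem f → (∀ i, Elem (g i)) → Elem (fun x => f (fun i => g i x))
  | bsum {n : ℕ} {f : (Fin (n + 1) → ℕ) → ℕ} : Elem f →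
      Elem (fun x : Fin (n + 1) → ℕ =>
        ∑ t ∈ Finset.range (x 0 + 1), f (Fin.cons t (fun i => x i.succ)))
  | bprod {n : ℕ} {f : (Fin (n + 1) → ℕ) → ℕ} : Elem f →
      Elem (fun x : Fin (n + 1) → ℕ =>
        ∏ t ∈ Finset.range (x 0 + 1), f (Fin.cons t (fun i => x i.succ)))

/-- A one-variable function `ℕ → ℕ` is elementary. -/
def Elem1 (f : ℕ → ℕ) : Prop :=
  Elem (fun x : Fin 1 → ℕ => f (x 0))

/-- A (nonnegative) real number is elementary if it is approximated, with an
elementary modulus, by an elementary rational Cauchy sequence. -/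
def ElemReal (α : ℝ) : Prop :=
  ∃ a b c : ℕ → ℕ, Elem1 a ∧ Elem1 b ∧ Elem1 c ∧
    ∀ k : ℕ, 1 ≤ k → ∀ x : ℕ, c k ≤ x →
      |(a x : ℝ) / ((b x : ℝ) + 1) - α| < 1 / (k : ℝ)

namespace ElemAux

lemma of_eq {n : ℕ} {f g : (Fin n → ℕ) → ℕ} (hf : Elem f) (h : ∀ x, f x = g x) : Elem g := by
  have hfg : f = g := funext h
  exact hfg ▸ hf

lemma elem1_of_eq {f g : ℕ → ℕ} (hf : Elem1 f) (h : ∀ x, f x = g x) : Elem1 g :=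
  of_eq hf fun x => h (x 0)

lemma elem1_id : Elem1 fun x => x := Elem.proj 0

lemma elem1_const : ∀ n : ℕ, Elem1 fun _ => n
  | 0 => Elem.zero
  | n + 1 => by
      have h := Elem.comp (n := 1) Elem.succ
        (g := fun _ => fun _ : Fin 1 → ℕ => n) (fun _ => elem1_const n)
      exact h

lemma elem1_comp {f g : ℕ → ℕ} (hf : Elem1 f) (hg : Elem1 g) :
    Elem1 fun x => f (g x) := by
  have h := Elem.comp (n := 1) hf (g := fun _ => fun x : Fin 1 → ℕ => g (x 0))
    (fun _ => hg)
  exact h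

lemma elem1_add {f g : ℕ → ℕ} (hf : Elem1 f) (hg : Elem1 g) :
    Elem1 fun x => f x + g x := by
  have h := Elem.comp (n := 1) Elem.add
    (g := Fin.cons (fun x : Fin 1 → ℕ => f (x 0)) (fun _ => fun x : Fin 1 → ℕ => g (x 0)))
    (fun i => Fin.cases hf (fun _ => hg) i)
  exact h

lemma elem1_mul {f g : ℕ → ℕ} (hf : Elem1 f) (hg : Elem1 g) :
    Elem1 fun x => f x * g x := by
  have h := Elem.comp (n := 1) Elem.mul
    (g := Fin.cons (fun x : Fin 1 → ℕ => f (x 0)) (fun _ => fun x : Fin 1 → ℕ => g (x 0)))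
    (fun i => Fin.cases hf (fun _ => hg) i)
  exact h

lemma elem1_tsub {f g : ℕ → ℕ} (hf : Elem1 f) (hg : Elem1 g) :
    Elem1 fun x => f x - g x := by
  have h := Elem.comp (n := 1) Elem.tsub
    (g := Fin.cons (fun x : Fin 1 → ℕ => f (x 0)) (fun _ => fun x : Fin 1 → ℕ => g (x 0)))
    (fun i => Fin.cases hf (fun _ => hg) i)
  exact h

lemma elem1_max {f g : ℕ → ℕ} (hf : Elem1 f) (hg : Elem1 g) :
    Elem1 fun x => max (f x) (g x) :=
  elem1_of_eq (elem1_add hf (elem1_tsub hg hf)) (fun x => by omega)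

end ElemAux
/-- The elementary real numbers are closed under the field
operations: sums, products, differences (when nonnegative) and reciprocals
(when positive) of nonnegative elementary reals are elementary. -/
theorem elemReal_field_ops (α β : ℝ) (hα0 : 0 ≤ α) (hβ0 : 0 ≤ β)
    (hα : ElemReal α) (hβ : ElemReal β) :
    ElemReal (α + β) ∧ ElemReal (α * β) ∧
      (β ≤ α → ElemReal (α - β)) ∧ (0 < α → ElemReal (1 / α)) := by
  classical
  open ElemAux in
  obtain ⟨a1, b1, c1, ea1, eb1, ec1, h1⟩ := hα
  obtain ⟨a2, b2, c2, ea2, eb2, ec2, h2⟩ := hβ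
  have hb1 : ∀ x, (0:ℝ) < (b1 x : ℝ) + 1 := fun x => by positivity
  have hb2 : ∀ x, (0:ℝ) < (b2 x : ℝ) + 1 := fun x => by positivity
  -- the common denominator
  have hden : ∀ x, (((b1 x + 1) * (b2 x + 1) - 1 : ℕ) : ℝ) + 1
      = ((b1 x : ℝ) + 1) * ((b2 x : ℝ) + 1) := by
    intro x
    have h : 1 ≤ (b1 x + 1) * (b2 x + 1) := Nat.one_le_iff_ne_zero.mpr (by positivity)
    rw [Nat.cast_sub h]
    push_cast
    ring
  have eB : Elem1 fun x => (b1 x + 1) * (b2 x + 1) - 1 :=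
    elem1_tsub (elem1_mul (elem1_add eb1 (elem1_const 1))
      (elem1_add eb2 (elem1_const 1))) (elem1_const 1)
  refine ⟨?_, ?_, ?_, ?_⟩
  · -- sum
    refine ⟨fun x => a1 x * (b2 x + 1) + a2 x * (b1 x + 1),
      fun x => (b1 x + 1) * (b2 x + 1) - 1,
      fun k => max (c1 (2 * k)) (c2 (2 * k)), ?_, eB, ?_, ?_⟩
    · exact elem1_add (elem1_mul ea1 (elem1_add eb2 (elem1_const 1)))
        (elem1_mul ea2 (elem1_add eb1 (elem1_const 1)))
    · exact elem1_max (elem1_comp ec1 (elem1_mul (elem1_const 2) elem1_id))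
        (elem1_comp ec2 (elem1_mul (elem1_const 2) elem1_id))
    · intro k hk x hx
      have h1' := h1 (2 * k) (by omega) x (le_trans (le_max_left _ _) hx)
      have h2' := h2 (2 * k) (by omega) x (le_trans (le_max_right _ _) hx)
      push_cast at h1' h2' ⊢
      rw [hden]
      have hk0 : (0:ℝ) < k := by exact_mod_cast hk
      have hval : ((a1 x : ℝ) * ((b2 x : ℝ) + 1) + (a2 x : ℝ) * ((b1 x : ℝ) + 1)) /
          (((b1 x : ℝ) + 1) * ((b2 x : ℝ) + 1))
          = (a1 x : ℝ) / ((b1 x : ℝ) + 1) + (a2 x : ℝ) / ((b2 x : ℝ) + 1) := by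
        field_simp
      rw [hval]
      have habs : |(a1 x : ℝ) / ((b1 x : ℝ) + 1) + (a2 x : ℝ) / ((b2 x : ℝ) + 1) - (α + β)|
          ≤ |(a1 x : ℝ) / ((b1 x : ℝ) + 1) - α| + |(a2 x : ℝ) / ((b2 x : ℝ) + 1) - β| := by
        have := abs_add_le ((a1 x : ℝ) / ((b1 x : ℝ) + 1) - α)
          ((a2 x : ℝ) / ((b2 x : ℝ) + 1) - β)
        calc |(a1 x : ℝ) / ((b1 x : ℝ) + 1) + (a2 x : ℝ) / ((b2 x : ℝ) + 1) - (α + β)|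
            = |((a1 x : ℝ) / ((b1 x : ℝ) + 1) - α) + ((a2 x : ℝ) / ((b2 x : ℝ) + 1) - β)| := by
              ring_nf
          _ ≤ _ := this
      have heq : 1 / (2 * (k:ℝ)) + 1 / (2 * (k:ℝ)) = 1 / (k:ℝ) := by
        rw [← add_div]
        rw [show (1:ℝ) + 1 = 2 * 1 by norm_num]
        rw [mul_div_mul_left 1 (k:ℝ) two_ne_zero]
      linarith
  · -- product
    obtain ⟨K, hKα, hKβ, hK1⟩ : ∃ K : ℕ, α + 1 ≤ (K : ℝ) ∧ β ≤ (K : ℝ) ∧ 1 ≤ K := by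
      refine ⟨⌈α⌉₊ + ⌈β⌉₊ + 1, ?_, ?_, by omega⟩
      · have := Nat.le_ceil α
        have h0 : (0:ℝ) ≤ (⌈β⌉₊ : ℝ) := by positivity
        push_cast
        linarith
      · have := Nat.le_ceil β
        have h0 : (0:ℝ) ≤ (⌈α⌉₊ : ℝ) := by positivity
        push_cast
        linarith
    have hK0 : (0:ℝ) < K := by exact_mod_cast hK1
    refine ⟨fun x => a1 x * a2 x, fun x => (b1 x + 1) * (b2 x + 1) - 1,
      fun k => max (max (c1 (2 * K * k)) (c2 (2 * K * k))) (max (c1 1) (c2 1)),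
      elem1_mul ea1 ea2, eB, ?_, ?_⟩
    · exact elem1_max
        (elem1_max (elem1_comp ec1 (elem1_mul (elem1_const (2 * K)) elem1_id))
          (elem1_comp ec2 (elem1_mul (elem1_const (2 * K)) elem1_id)))
        (elem1_max (elem1_const (c1 1)) (elem1_const (c2 1)))
    · intro k hk x hx
      have hk0 : (0:ℝ) < k := by exact_mod_cast hk
      have hKk : 1 ≤ 2 * K * k :=
        Nat.one_le_iff_ne_zero.mpr
          (Nat.mul_ne_zero (Nat.mul_ne_zero two_ne_zero (by omega)) (by omega))
      have h1' := h1 (2 * K * k) hKk x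
        (le_trans (le_trans (le_max_left _ _) (le_max_left _ _)) hx)
      have h2' := h2 (2 * K * k) hKk x
        (le_trans (le_trans (le_max_right _ _) (le_max_left _ _)) hx)
      have h11 := h1 1 le_rfl x
        (le_trans (le_trans (le_max_left _ _) (le_max_right _ _)) hx)
      push_cast at h1' h2' h11 ⊢
      rw [hden]
      set P : ℝ := (a1 x : ℝ) / ((b1 x : ℝ) + 1) with hPdef
      set Q : ℝ := (a2 x : ℝ) / ((b2 x : ℝ) + 1) with hQdef
      have hP0 : 0 ≤ P := by rw [hPdef]; positivity
      have hQ0 : 0 ≤ Q := by rw [hQdef]; positivity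
      have hPK : P ≤ (K : ℝ) := by
        have := (abs_lt.mp h11).2
        linarith
      have hval : (a1 x : ℝ) * (a2 x : ℝ) / (((b1 x : ℝ) + 1) * ((b2 x : ℝ) + 1))
          = P * Q := by
        rw [hPdef, hQdef, div_mul_div_comm]
      rw [hval]
      have step1 : |P * Q - α * β| ≤ P * |Q - β| + β * |P - α| := by
        calc |P * Q - α * β| = |P * (Q - β) + β * (P - α)| := by ring_nf
          _ ≤ |P * (Q - β)| + |β * (P - α)| := abs_add_le _ _
          _ = P * |Q - β| + β * |P - α| := by
              rw [abs_mul, abs_mul, abs_of_nonneg hP0, abs_of_nonneg hβ0]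
      have step2 : P * |Q - β| ≤ (K:ℝ) * |Q - β| :=
        mul_le_mul_of_nonneg_right hPK (abs_nonneg _)
      have step3 : β * |P - α| ≤ (K:ℝ) * |P - α| :=
        mul_le_mul_of_nonneg_right hKβ (abs_nonneg _)
      have step4 : (K:ℝ) * |Q - β| < (K:ℝ) * (1 / (2 * K * k)) :=
        mul_lt_mul_of_pos_left h2' hK0
      have step5 : (K:ℝ) * |P - α| < (K:ℝ) * (1 / (2 * K * k)) :=
        mul_lt_mul_of_pos_left h1' hK0
      have hKne : (K:ℝ) ≠ 0 := ne_of_gt hK0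
      have hkne : (k:ℝ) ≠ 0 := ne_of_gt hk0
      have e1 : (K:ℝ) * (1 / (2 * K * k)) = 1 / (2 * k) := by
        rw [mul_one_div, eq_div_iff (by positivity : (2:ℝ) * k ≠ 0)]
        field_simp
      have heq : (K:ℝ) * (1 / (2 * K * k)) + (K:ℝ) * (1 / (2 * K * k)) = 1 / k := by
        rw [e1, ← add_div]
        rw [show (1:ℝ) + 1 = 2 * 1 by norm_num]
        rw [mul_div_mul_left 1 (k:ℝ) two_ne_zero]
      linarith
  · -- difference
    intro hle
    refine ⟨fun x => a1 x * (b2 x + 1) - a2 x * (b1 x + 1),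
      fun x => (b1 x + 1) * (b2 x + 1) - 1,
      fun k => max (c1 (2 * k)) (c2 (2 * k)), ?_, eB, ?_, ?_⟩
    · exact elem1_tsub (elem1_mul ea1 (elem1_add eb2 (elem1_const 1)))
        (elem1_mul ea2 (elem1_add eb1 (elem1_const 1)))
    · exact elem1_max (elem1_comp ec1 (elem1_mul (elem1_const 2) elem1_id))
        (elem1_comp ec2 (elem1_mul (elem1_const 2) elem1_id))
    · intro k hk x hx
      have h1' := h1 (2 * k) (by omega) x (le_trans (le_max_left _ _) hx)
      have h2' := h2 (2 * k) (by omega) x (le_trans (le_max_right _ _) hx)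
      push_cast at h1' h2'
      beta_reduce
      rw [hden]
      have hk0 : (0:ℝ) < k := by exact_mod_cast hk
      set P : ℝ := (a1 x : ℝ) / ((b1 x : ℝ) + 1) with hPdef
      set Q : ℝ := (a2 x : ℝ) / ((b2 x : ℝ) + 1) with hQdef
      have heq : 1 / (2 * (k:ℝ)) + 1 / (2 * (k:ℝ)) = 1 / (k:ℝ) := by
        rw [← add_div]
        rw [show (1:ℝ) + 1 = 2 * 1 by norm_num]
        rw [mul_div_mul_left 1 (k:ℝ) two_ne_zero]
      have hPQ : |(P - Q) - (α - β)| < 1 / (k:ℝ) := by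
        calc |(P - Q) - (α - β)| = |(P - α) + -(Q - β)| := by ring_nf
          _ ≤ |P - α| + |-(Q - β)| := abs_add_le _ _
          _ = |P - α| + |Q - β| := by rw [abs_neg]
          _ < 1 / (2 * (k:ℝ)) + 1 / (2 * (k:ℝ)) := by
              push_cast at h1' h2' ⊢
              exact add_lt_add h1' h2'
          _ = 1 / (k:ℝ) := heq
      by_cases hmn : a2 x * (b1 x + 1) ≤ a1 x * (b2 x + 1)
      · rw [Nat.cast_sub hmn]
        push_cast
        have hval : ((a1 x : ℝ) * ((b2 x : ℝ) + 1) - (a2 x : ℝ) * ((b1 x : ℝ) + 1)) /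
            (((b1 x : ℝ) + 1) * ((b2 x : ℝ) + 1)) = P - Q := by
          rw [hPdef, hQdef]
          field_simp
        rw [hval]
        exact hPQ
      · have hz : a1 x * (b2 x + 1) - a2 x * (b1 x + 1) = 0 := by omega
        rw [hz]
        push_cast
        rw [zero_div]
        have hlt : (a1 x : ℝ) * ((b2 x : ℝ) + 1) < (a2 x : ℝ) * ((b1 x : ℝ) + 1) := by
          have : a1 x * (b2 x + 1) < a2 x * (b1 x + 1) := by omega
          exact_mod_cast this
        have hPQneg : P - Q < 0 := by
          rw [hPdef, hQdef]
          rw [div_sub_div _ _ (ne_of_gt (hb1 x)) (ne_of_gt (hb2 x))]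
          apply div_neg_of_neg_of_pos
          · linarith
          · exact mul_pos (hb1 x) (hb2 x)
        have habs := (abs_lt.mp hPQ).1
        rw [abs_of_nonpos (by linarith : (0:ℝ) - (α - β) ≤ 0)]
        linarith
  · -- reciprocal
    intro hpos
    obtain ⟨m, hm1, hmα⟩ : ∃ m : ℕ, 1 ≤ m ∧ 2 / α < (m : ℝ) := by
      refine ⟨⌈2 / α⌉₊ + 1, by omega, ?_⟩
      have h := Nat.le_ceil (2 / α)
      push_cast
      linarith
    have hm0 : (0:ℝ) < m := by exact_mod_cast hm1
    have h2m : 2 < (m : ℝ) * α := by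
      rw [div_lt_iff₀ hpos] at hmα
      linarith
    have h1m : 1 / (m : ℝ) < α / 2 := by
      rw [div_lt_div_iff₀ hm0 (by norm_num : (0:ℝ) < 2)]
      linarith
    refine ⟨fun x => b1 x + 1, fun x => a1 x - 1,
      fun k => max (c1 m) (c1 (m * m * k)),
      elem1_add eb1 (elem1_const 1), elem1_tsub ea1 (elem1_const 1), ?_, ?_⟩
    · exact elem1_max (elem1_const (c1 m))
        (elem1_comp ec1 (elem1_mul (elem1_const (m * m)) elem1_id))
    · intro k hk x hx
      have hk0 : (0:ℝ) < k := by exact_mod_cast hk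
      have h1m' := h1 m hm1 x (le_trans (le_max_left _ _) hx)
      have h1k := h1 (m * m * k)
        (Nat.one_le_iff_ne_zero.mpr
          (Nat.mul_ne_zero (Nat.mul_ne_zero (by omega) (by omega)) (by omega))) x (le_trans (le_max_right _ _) hx)
      push_cast at h1m' h1k
      set P : ℝ := (a1 x : ℝ) / ((b1 x : ℝ) + 1) with hPdef
      have hPlb : 1 / (m:ℝ) < P := by
        have := (abs_lt.mp h1m').1
        have hhalf : α / 2 > 1 / (m:ℝ) := h1m
        linarith
      have hP0 : 0 < P := lt_trans (by positivity) hPlb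
      have ha1 : 1 ≤ a1 x := by
        by_contra h
        have h0 : a1 x = 0 := by omega
        rw [hPdef, h0] at hP0
        simp at hP0
      rw [Nat.cast_sub ha1]
      push_cast
      have hdenom : (a1 x : ℝ) - 1 + 1 = (a1 x : ℝ) := by ring
      rw [hdenom]
      have ha1R : (0:ℝ) < (a1 x : ℝ) := by exact_mod_cast ha1
      have hval : ((b1 x : ℝ) + 1) / (a1 x : ℝ) = 1 / P := by
        rw [hPdef, one_div_div]
      rw [hval]
      have hαne : α ≠ 0 := ne_of_gt hpos
      have hPne : P ≠ 0 := ne_of_gt hP0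
      have e : 1 / P - 1 / α = (α - P) / (P * α) := by
        field_simp
      rw [e, abs_div, abs_of_pos (by positivity : (0:ℝ) < P * α)]
      rw [div_lt_iff₀ (by positivity : (0:ℝ) < P * α)]
      have hPα : 2 / ((m:ℝ) * m) < P * α := by
        calc 2 / ((m:ℝ) * m) = (1 / (m:ℝ)) * (2 / (m:ℝ)) := by
              field_simp
          _ < P * α := by
              apply mul_lt_mul'' hPlb _ (by positivity) (by positivity)
              rw [div_lt_iff₀ hm0]
              linarith
      have habs : |α - P| < 1 / ((m:ℝ) * m * k) := by
        rw [abs_sub_comm]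
        exact h1k
      have h8 : 1 / (k:ℝ) * (2 / ((m:ℝ) * m)) ≤ 1 / (k:ℝ) * (P * α) := by
        apply mul_le_mul_of_nonneg_left hPα.le (by positivity)
      have h9 : 1 / ((m:ℝ) * m * k) ≤ 1 / (k:ℝ) * (2 / ((m:ℝ) * m)) := by
        rw [div_mul_div_comm, one_mul, mul_comm ((m:ℝ) * m) (k:ℝ)]
        gcongr
        norm_num
      linarith
end

section
/- A nonnegative real number α is an elementary real number if and only if there exists a fast elementary map g : ℕ → ℚ with lim_{x→∞} g(x) = α. -/
/-- A map `g : ℕ → ℚ` is elementary if `g(x) = a(x)/(b(x)+1)` for elementary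
`a, b : ℕ → ℕ`. -/
def ElemRatSeq (g : ℕ → ℚ) : Prop :=
  ∃ a b : ℕ → ℕ, Elem1 a ∧ Elem1 b ∧ ∀ x : ℕ, g x = (a x : ℚ) / ((b x : ℚ) + 1)

/-- A map `g : ℕ → ℚ` is fast if `|g(x) − g(x+1)| < 7^{-(x+1)}` for all `x`. -/
def FastSeq (g : ℕ → ℚ) : Prop :=
  ∀ x : ℕ, |g x - g (x + 1)| < 1 / 7 ^ (x + 1)

open Filter

lemma Elem1.comp' {f g : ℕ → ℕ} (hf : Elem1 f) (hg : Elem1 g) : Elem1 (fun x => f (g x)) :=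
  Elem.comp (f := fun x : Fin 1 → ℕ => f (x 0))
    (g := fun _ : Fin 1 => fun x : Fin 1 → ℕ => g (x 0)) hf (fun _ => hg)

lemma elem1_const (n : ℕ) : Elem1 (fun _ => n) := by
  induction n with
  | zero => exact Elem.zero
  | succ k ih => exact Elem1.comp' (f := fun y => y + 1) (g := fun _ => k) Elem.succ ih

lemma elem1_pow7 : Elem1 (fun x => 7 ^ (x + 1)) := by
  have h := Elem.bprod (n := 0) (f := fun _ : Fin 1 → ℕ => 7) (elem1_const 7)
  have heq : (fun x : Fin 1 → ℕ =>
      ∏ t ∈ Finset.range (x 0 + 1), (fun _ : Fin 1 → ℕ => 7) (Fin.cons t (fun i => x i.succ)))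
      = fun x : Fin 1 → ℕ => 7 ^ (x 0 + 1) := by
    funext x; simp [Finset.prod_const]
  unfold Elem1
  rw [← heq]
  exact h

lemma elem1_pow7' : Elem1 (fun x => 7 ^ (x + 2)) :=
  Elem1.comp' (f := fun y => 7 ^ (y + 1)) (g := fun y => y + 1) elem1_pow7 Elem.succ

/-- A nonnegative real number is elementary iff it is the limit
of a fast elementary rational sequence. -/
theorem elemReal_iff_fast_elemRatSeq (α : ℝ) (hα0 : 0 ≤ α) :
    ElemReal α ↔ ∃ g : ℕ → ℚ, ElemRatSeq g ∧ FastSeq g ∧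
      Filter.Tendsto (fun x => (g x : ℝ)) Filter.atTop (nhds α) := by
  constructor
  · rintro ⟨a, b, c, ha, hb, hc, h⟩
    set M : ℕ → ℕ := fun x => c (7 ^ (x + 2)) with hM
    set g : ℕ → ℚ := fun x => (a (M x) : ℚ) / ((b (M x) : ℚ) + 1) with hg
    have hMel : Elem1 M :=
      Elem1.comp' (f := c) (g := fun y => 7 ^ (y + 2)) hc elem1_pow7'
    have keyR : ∀ x : ℕ, |(g x : ℝ) - α| < (1/7 : ℝ) ^ (x + 2) := by
      intro x
      have h1 : 1 ≤ 7 ^ (x + 2) := Nat.one_le_pow _ _ (by norm_num)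
      have h2 := h (7 ^ (x + 2)) h1 (M x) le_rfl
      have hcast : (g x : ℝ) = (a (M x) : ℝ) / ((b (M x) : ℝ) + 1) := by
        rw [hg]; push_cast; ring
      rw [hcast]
      have : (1 : ℝ) / ((7 ^ (x + 2) : ℕ) : ℝ) = (1/7 : ℝ) ^ (x + 2) := by
        push_cast
        rw [one_div_pow]
      rw [this] at h2
      exact h2
    refine ⟨g, ⟨fun x => a (M x), fun x => b (M x), ?_, ?_, fun x => rfl⟩, ?_, ?_⟩
    · exact Elem1.comp' (f := a) (g := M) ha hMel
    · exact Elem1.comp' (f := b) (g := M) hb hMel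
    · intro x
      have hR : |(g x : ℝ) - (g (x + 1) : ℝ)| < 1 / 7 ^ (x + 1) := by
        have t1 := keyR x
        have t2 := keyR (x + 1)
        have tri : |(g x : ℝ) - (g (x + 1) : ℝ)| ≤ |(g x : ℝ) - α| + |(g (x+1) : ℝ) - α| := by
          have := abs_sub_le ((g x : ℝ)) α ((g (x+1) : ℝ))
          rwa [abs_sub_comm α ((g (x+1) : ℝ))] at this
        have hu : (0 : ℝ) < (1/7 : ℝ) ^ (x + 1) := by positivity
        have p1 : (1 : ℝ) / 7 ^ (x + 1) = (1/7 : ℝ) ^ (x + 1) := by rw [one_div_pow]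
        have p2 : (1/7 : ℝ) ^ (x + 2) = (1/7 : ℝ) ^ (x + 1) * (1/7) := pow_succ _ _
        have p3 : (1/7 : ℝ) ^ (x + 3) = (1/7 : ℝ) ^ (x + 1) * (1/7) * (1/7) := by
          rw [pow_succ, pow_succ]
        rw [p1]
        rw [p2] at t1
        rw [p3] at t2
        linarith
      have hq : ((|g x - g (x + 1)| : ℚ) : ℝ) < (((1:ℚ) / 7 ^ (x + 1) : ℚ) : ℝ) := by
        push_cast
        exact hR
      exact_mod_cast hq
    · rw [tendsto_iff_dist_tendsto_zero]
      have tz : Tendsto (fun x : ℕ => ((1:ℝ)/7) ^ (x + 2)) atTop (nhds 0) := by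
        have base : Tendsto (fun n : ℕ => ((1:ℝ)/7) ^ n) atTop (nhds 0) :=
          tendsto_pow_atTop_nhds_zero_of_lt_one (by norm_num) (by norm_num)
        exact base.comp (tendsto_add_atTop_nat 2)
      refine squeeze_zero (fun x => dist_nonneg) (fun x => ?_) tz
      rw [Real.dist_eq]
      exact (keyR x).le
  · rintro ⟨g, ⟨a, b, ha, hb, hab⟩, hfast, hlim⟩
    refine ⟨a, b, id, ha, hb, Elem.proj 0, ?_⟩
    intro k hk x hx
    have hcast : (g x : ℝ) = (a x : ℝ) / ((b x : ℝ) + 1) := by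
      rw [hab x]; push_cast; ring
    rw [← hcast]
    have hdist : ∀ n : ℕ, dist ((g n : ℝ)) ((g (n+1) : ℝ)) ≤ (1/7 : ℝ) * (1/7) ^ n := by
      intro n
      rw [Real.dist_eq]
      have h1 : |(g n : ℝ) - (g (n+1) : ℝ)| < 1 / 7 ^ (n + 1) := by
        have h0 : ((|g n - g (n+1)| : ℚ) : ℝ) < (((1:ℚ) / 7 ^ (n + 1) : ℚ) : ℝ) := by
          exact_mod_cast hfast n
        push_cast at h0
        exact h0
      have h2 : (1 : ℝ) / 7 ^ (n + 1) = (1/7 : ℝ) * (1/7) ^ n := by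
        rw [pow_succ', one_div_pow]; field_simp
      linarith [h2 ▸ h1]
    have key := dist_le_of_le_geometric_of_tendsto (1/7 : ℝ) (1/7 : ℝ) (by norm_num)
      hdist hlim x
    rw [Real.dist_eq] at key
    have heq : (1/7 : ℝ) * (1/7) ^ x / (1 - 1/7) = 1 / (6 * 7 ^ x) := by
      rw [one_div_pow]
      have h7 : (7 : ℝ) ^ x ≠ 0 := by positivity
      field_simp
      ring
    rw [heq] at key
    have hpow : ((x : ℝ)) + 1 ≤ 7 ^ x := by
      have := Nat.lt_pow_self (n := x) (by norm_num : 1 < 7)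
      exact_mod_cast Nat.succ_le_of_lt this
    have hkx : (k : ℝ) ≤ x := by exact_mod_cast hx
    have hk1 : (1 : ℝ) ≤ k := by exact_mod_cast hk
    have hkpos : (0 : ℝ) < k := by linarith
    have hlt : (k : ℝ) < 6 * 7 ^ x := by nlinarith
    calc |(g x : ℝ) - α| ≤ 1 / (6 * 7 ^ x) := key
      _ < 1 / (k : ℝ) := by
          rw [div_lt_div_iff₀ (by positivity) hkpos]
          linarith
end
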